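/- Let ι be a finite type and let S₁, S₂, S₃ be subsets of the set of nonzero finitely supported functions ι → ℕ such that, regarding such functions as vectors in ι → ℝ, the convex cones spanned by S₁, by S₂ and by S₃ pairwise intersect only in {0}. Let Q₁, Q₂, Q₃, R₁, R₂, R₃ be multivariate formal power series in MvPowerSeries ι ℤ such that each of Q₁, Q₂, Q₃, R₁, R₂, R₃ has constant coefficient 1 and, for each i ∈ {1,2,3}, every nonzero exponent d with nonzero coefficient in Qᵢ or in Rᵢ belongs to Sᵢ. If Q₁·Q₂·Q₃ = R₁·R₂·R₃, then Q₁ = R₁, Q₂ = R₂ and Q₃ = R₃. -/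

import Mathlib

/-- The convex cone in `ι → ℝ` spanned by a set `S` of exponents (finitely supported
functions `ι → ℕ`): all finite nonnegative real linear combinations of elements of `S`. -/
def coneOf {ι : Type*} (S : Set (ι →₀ ℕ)) : Set (ι → ℝ) :=
  {x | ∃ (m : ℕ) (c : Fin m → ℝ) (v : Fin m → (ι →₀ ℕ)),
    (∀ j, 0 ≤ c j) ∧ (∀ j, v j ∈ S) ∧ x = ∑ j, c j • (fun i => ((v j i : ℕ) : ℝ))}

lemma mem_coneOf_of_mem {ι : Type*} {S : Set (ι →₀ ℕ)} {d : ι →₀ ℕ} (hd : d ∈ S) :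
    (fun i => ((d i : ℕ) : ℝ)) ∈ coneOf S := by
  refine ⟨1, fun _ => 1, fun _ => d, fun _ => zero_le_one, fun _ => hd, ?_⟩
  simp

/-- **Lemma (splitting of a power-series identity along cone-disjoint supports).**
Let `S₁, S₂, S₃` be sets of nonzero exponents whose spanned convex cones pairwise meet
only in `0`. If `Q₁, Q₂, Q₃, R₁, R₂, R₃` are formal power series with constant term `1`
whose nonzero exponents with nonzero coefficient lie in `S₁`, `S₂`, `S₃` respectively,
and `Q₁·Q₂·Q₃ = R₁·R₂·R₃`, then `Q₁ = R₁`, `Q₂ = R₂` and `Q₃ = R₃`. -/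
theorem powerSeries_splitting {ι : Type*} [Fintype ι]
    (S₁ S₂ S₃ : Set (ι →₀ ℕ))
    (hS₁ : ∀ d ∈ S₁, d ≠ 0) (hS₂ : ∀ d ∈ S₂, d ≠ 0) (hS₃ : ∀ d ∈ S₃, d ≠ 0)
    (h12 : coneOf S₁ ∩ coneOf S₂ ⊆ {0})
    (h13 : coneOf S₁ ∩ coneOf S₃ ⊆ {0})
    (h23 : coneOf S₂ ∩ coneOf S₃ ⊆ {0})
    (Q₁ Q₂ Q₃ R₁ R₂ R₃ : MvPowerSeries ι ℤ)
    (hQ₁c : MvPowerSeries.coeff 0 Q₁ = 1) (hQ₂c : MvPowerSeries.coeff 0 Q₂ = 1)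
    (hQ₃c : MvPowerSeries.coeff 0 Q₃ = 1) (hR₁c : MvPowerSeries.coeff 0 R₁ = 1)
    (hR₂c : MvPowerSeries.coeff 0 R₂ = 1) (hR₃c : MvPowerSeries.coeff 0 R₃ = 1)
    (hQ₁s : ∀ d : ι →₀ ℕ, d ≠ 0 → MvPowerSeries.coeff d Q₁ ≠ 0 → d ∈ S₁)
    (hQ₂s : ∀ d : ι →₀ ℕ, d ≠ 0 → MvPowerSeries.coeff d Q₂ ≠ 0 → d ∈ S₂)
    (hQ₃s : ∀ d : ι →₀ ℕ, d ≠ 0 → MvPowerSeries.coeff d Q₃ ≠ 0 → d ∈ S₃)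
    (hR₁s : ∀ d : ι →₀ ℕ, d ≠ 0 → MvPowerSeries.coeff d R₁ ≠ 0 → d ∈ S₁)
    (hR₂s : ∀ d : ι →₀ ℕ, d ≠ 0 → MvPowerSeries.coeff d R₂ ≠ 0 → d ∈ S₂)
    (hR₃s : ∀ d : ι →₀ ℕ, d ≠ 0 → MvPowerSeries.coeff d R₃ ≠ 0 → d ∈ S₃)
    (heq : Q₁ * Q₂ * Q₃ = R₁ * R₂ * R₃) :
    Q₁ = R₁ ∧ Q₂ = R₂ ∧ Q₃ = R₃ := by
  classical
  set φ : (ι →₀ ℕ) → (ι → ℝ) := fun d i => ((d i : ℕ) : ℝ) with hφdef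
  have hφne : ∀ d : ι →₀ ℕ, d ≠ 0 → φ d ≠ 0 := by
    intro d hd h0
    apply hd
    ext i
    have := congrFun h0 i
    simpa [φ] using this
  set f : Fin 3 → MvPowerSeries ι ℤ := ![Q₁, Q₂, Q₃] with hf
  set g : Fin 3 → MvPowerSeries ι ℤ := ![R₁, R₂, R₃] with hg
  set D : (ι →₀ ℕ) → ℕ := fun e => ∑ i, e i with hD
  have hD0 : ∀ e : ι →₀ ℕ, D e = 0 → e = 0 := by
    intro e he
    ext i
    have := (Finset.sum_eq_zero_iff.mp he) i (Finset.mem_univ i)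
    simpa using this
  have key : ∀ n : ℕ, ∀ d : ι →₀ ℕ, D d = n →
      ∀ j : Fin 3, MvPowerSeries.coeff d (f j) = MvPowerSeries.coeff d (g j) := by
    intro n
    induction n using Nat.strong_induction_on with
    | _ n IH =>
    intro d hdn
    by_cases hd0 : d = 0
    · subst hd0
      intro j
      fin_cases j <;>
        simp [f, g, hQ₁c, hQ₂c, hQ₃c, hR₁c, hR₂c, hR₃c]
    · -- the coefficient of `d` in the products
      have hprod : MvPowerSeries.coeff d (∏ i : Fin 3, f i)
          = MvPowerSeries.coeff d (∏ i : Fin 3, g i) := by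
        rw [Fin.prod_univ_three, Fin.prod_univ_three]
        simp only [hf, hg, Matrix.cons_val_zero, Matrix.cons_val_one, Matrix.head_cons,
          Matrix.cons_val_two, Matrix.tail_cons]
        rw [heq]
      rw [MvPowerSeries.coeff_prod, MvPowerSeries.coeff_prod] at hprod
      have hsum : ∑ l ∈ Finset.finsuppAntidiag (Finset.univ : Finset (Fin 3)) d,
          ((∏ i : Fin 3, MvPowerSeries.coeff (l i) (f i))
            - ∏ i : Fin 3, MvPowerSeries.coeff (l i) (g i)) = 0 := by
        rw [Finset.sum_sub_distrib, hprod, sub_self]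
      -- the three special points
      set T : Finset (Fin 3 →₀ (ι →₀ ℕ)) :=
        {Finsupp.single 0 d, Finsupp.single 1 d, Finsupp.single 2 d} with hT
      have hTmem : ∀ j : Fin 3, Finsupp.single j d ∈
          Finset.finsuppAntidiag (Finset.univ : Finset (Fin 3)) d := by
        intro j
        rw [Finset.mem_finsuppAntidiag]
        refine ⟨?_, Finset.subset_univ _⟩
        rw [Finset.sum_eq_single j]
        · simp
        · intro b _ hb; simp [Finsupp.single_apply, (Ne.symm hb)]
        · simp
      have hTsub : T ⊆ Finset.finsuppAntidiag (Finset.univ : Finset (Fin 3)) d := by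
        intro l hl
        simp only [hT, Finset.mem_insert, Finset.mem_singleton] at hl
        rcases hl with h | h | h <;> (subst h; exact hTmem _)
      have hzero : ∀ l ∈ Finset.finsuppAntidiag (Finset.univ : Finset (Fin 3)) d,
          l ∉ T →
          ((∏ i : Fin 3, MvPowerSeries.coeff (l i) (f i))
            - ∏ i : Fin 3, MvPowerSeries.coeff (l i) (g i)) = 0 := by
        intro l hl hlT
        rw [Finset.mem_finsuppAntidiag] at hl
        have hlsum : l 0 + l 1 + l 2 = d := by
          have := hl.1
          rwa [Fin.sum_univ_three] at this
        have hdeg : D (l 0) + D (l 1) + D (l 2) = n := by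
          rw [← hdn, ← hlsum]
          simp only [hD, Finsupp.add_apply]
          rw [Finset.sum_add_distrib, Finset.sum_add_distrib]
        -- each component has degree < n
        have hdeg' : ∑ m : Fin 3, D (l m) = n := by
          rw [Fin.sum_univ_three]; exact hdeg
        have hlsum' : ∑ m : Fin 3, l m = d := by
          rw [Fin.sum_univ_three]; exact hlsum
        have hlt : ∀ k : Fin 3, D (l k) < n := by
          intro k
          by_contra hk
          push_neg at hk
          have hsplitD : D (l k) + ∑ m ∈ Finset.univ.erase k, D (l m) = n := by
            rw [Finset.add_sum_erase Finset.univ (fun m => D (l m)) (Finset.mem_univ k)]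
            exact hdeg'
          have herase0 : ∑ m ∈ Finset.univ.erase k, D (l m) = 0 := by omega
          have hothers : ∀ m : Fin 3, m ≠ k → l m = 0 := by
            intro m hm
            apply hD0
            have hmem : m ∈ Finset.univ.erase k := Finset.mem_erase.mpr ⟨hm, Finset.mem_univ m⟩
            exact (Finset.sum_eq_zero_iff.mp herase0) m hmem
          have hlk : l k = d := by
            have h1 : l k + ∑ m ∈ Finset.univ.erase k, l m = d := by
              rw [Finset.add_sum_erase Finset.univ (fun m => l m) (Finset.mem_univ k)]
              exact hlsum'
            rw [Finset.sum_eq_zero (fun m hm => hothers m (Finset.mem_erase.mp hm).1),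
              add_zero] at h1
            exact h1
          apply hlT
          have hls : l = Finsupp.single k d := by
            ext m i
            by_cases hmk : m = k
            · subst hmk; simp [hlk]
            · simp [hothers m hmk, Finsupp.single_apply, Ne.symm hmk]
          rw [hls]
          have hk3 : k = 0 ∨ k = 1 ∨ k = 2 := by omega
          rcases hk3 with h | h | h <;> subst h <;> simp [hT]
        have hcoeff : ∀ k : Fin 3,
            MvPowerSeries.coeff (l k) (f k) = MvPowerSeries.coeff (l k) (g k) := by
          intro k
          exact IH (D (l k)) (hlt k) (l k) rfl k
        rw [Finset.prod_congr rfl (fun k _ => hcoeff k), sub_self]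
      have hTsum : ∑ l ∈ T,
          ((∏ i : Fin 3, MvPowerSeries.coeff (l i) (f i))
            - ∏ i : Fin 3, MvPowerSeries.coeff (l i) (g i)) = 0 := by
        rw [← hsum]
        exact Finset.sum_subset hTsub (fun l hl hl' => hzero l hl hl')
      -- compute the sum over T
      have hne01 : (Finsupp.single (0 : Fin 3) d) ≠ Finsupp.single 1 d := by
        intro h; exact (by decide : (0 : Fin 3) ≠ 1) (Finsupp.single_left_injective hd0 h)
      have hne02 : (Finsupp.single (0 : Fin 3) d) ≠ Finsupp.single 2 d := by
        intro h; exact (by decide : (0 : Fin 3) ≠ 2) (Finsupp.single_left_injective hd0 h)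
      have hne12 : (Finsupp.single (1 : Fin 3) d) ≠ Finsupp.single 2 d := by
        intro h; exact (by decide : (1 : Fin 3) ≠ 2) (Finsupp.single_left_injective hd0 h)
      have hval : ∀ j : Fin 3,
          ((∏ i : Fin 3, MvPowerSeries.coeff ((Finsupp.single j d) i) (f i))
            - ∏ i : Fin 3, MvPowerSeries.coeff ((Finsupp.single j d) i) (g i))
          = MvPowerSeries.coeff d (f j) - MvPowerSeries.coeff d (g j) := by
        intro j
        fin_cases j <;>
          · rw [Fin.prod_univ_three, Fin.prod_univ_three]
            simp [f, g, Finsupp.single_apply, Fin.ext_iff, hQ₁c, hQ₂c, hQ₃c, hR₁c, hR₂c, hR₃c]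
      have hmain :
          (MvPowerSeries.coeff d Q₁ - MvPowerSeries.coeff d R₁)
          + (MvPowerSeries.coeff d Q₂ - MvPowerSeries.coeff d R₂)
          + (MvPowerSeries.coeff d Q₃ - MvPowerSeries.coeff d R₃) = 0 := by
        rw [hT] at hTsum
        rw [Finset.sum_insert (by simp [hne01, hne02]),
          Finset.sum_insert (by simp [hne12]), Finset.sum_singleton] at hTsum
        rw [hval 0, hval 1, hval 2] at hTsum
        simp only [hf, hg, Matrix.cons_val_zero, Matrix.cons_val_one, Matrix.head_cons,
          Matrix.cons_val_two, Matrix.tail_cons] at hTsum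
        linarith [hTsum]
      -- cone argument
      have hc1 : MvPowerSeries.coeff d Q₁ ≠ MvPowerSeries.coeff d R₁ →
          φ d ∈ coneOf S₁ := by
        intro h
        by_cases hq : MvPowerSeries.coeff d Q₁ ≠ 0
        · exact mem_coneOf_of_mem (hQ₁s d hd0 hq)
        · push_neg at hq
          exact mem_coneOf_of_mem (hR₁s d hd0 (fun hr => h (by rw [hq, hr])))
      have hc2 : MvPowerSeries.coeff d Q₂ ≠ MvPowerSeries.coeff d R₂ →
          φ d ∈ coneOf S₂ := by
        intro h
        by_cases hq : MvPowerSeries.coeff d Q₂ ≠ 0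
        · exact mem_coneOf_of_mem (hQ₂s d hd0 hq)
        · push_neg at hq
          exact mem_coneOf_of_mem (hR₂s d hd0 (fun hr => h (by rw [hq, hr])))
      have hc3 : MvPowerSeries.coeff d Q₃ ≠ MvPowerSeries.coeff d R₃ →
          φ d ∈ coneOf S₃ := by
        intro h
        by_cases hq : MvPowerSeries.coeff d Q₃ ≠ 0
        · exact mem_coneOf_of_mem (hQ₃s d hd0 hq)
        · push_neg at hq
          exact mem_coneOf_of_mem (hR₃s d hd0 (fun hr => h (by rw [hq, hr])))
      have e1 : MvPowerSeries.coeff d Q₁ = MvPowerSeries.coeff d R₁ ∧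
          MvPowerSeries.coeff d Q₂ = MvPowerSeries.coeff d R₂ ∧
          MvPowerSeries.coeff d Q₃ = MvPowerSeries.coeff d R₃ := by
        by_cases a1 : MvPowerSeries.coeff d Q₁ = MvPowerSeries.coeff d R₁ <;>
        by_cases a2 : MvPowerSeries.coeff d Q₂ = MvPowerSeries.coeff d R₂ <;>
        by_cases a3 : MvPowerSeries.coeff d Q₃ = MvPowerSeries.coeff d R₃
        · exact ⟨a1, a2, a3⟩
        · exfalso; apply a3; linarith [hmain, a1, a2]
        · exfalso; apply a2; linarith [hmain]
        · exact absurd (h23 ⟨hc2 a2, hc3 a3⟩) (hφne d hd0)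
        · exfalso; apply a1; linarith [hmain]
        · exact absurd (h13 ⟨hc1 a1, hc3 a3⟩) (hφne d hd0)
        · exact absurd (h12 ⟨hc1 a1, hc2 a2⟩) (hφne d hd0)
        · exact absurd (h12 ⟨hc1 a1, hc2 a2⟩) (hφne d hd0)
      intro j
      fin_cases j <;> simp [f, g, e1.1, e1.2.1, e1.2.2]
  have keyall : ∀ (d : ι →₀ ℕ) (j : Fin 3),
      MvPowerSeries.coeff d (f j) = MvPowerSeries.coeff d (g j) :=
    fun d j => key (D d) d rfl j
  refine ⟨?_, ?_, ?_⟩ <;> ext d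
  · have := keyall d 0; simpa [f, g] using this
  · have := keyall d 1; simpa [f, g] using this
  · have := keyall d 2; simpa [f, g] using this
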